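/- Let ξ̂_1, ξ̂_2, … be i.i.d. Ξ-valued random variables with distribution P^c ∈ Δ_J, let P̂_N, r̂_N be the Bayesian center and radii built from the first N samples, and let V̂_N* denote the unique fixed point in 𝒱(S) of the robust Bellman operator with ambiguity set 𝔓(P̂_N, r̂_N), while V* is the unique fixed point of the true Bellman operator under P^c. Then under the stochastic optimal control setup with weight function w, ‖V̂_N* − V*‖_w → 0 almost surely as N → ∞. -/

import Mathlib

open Filter Topology MeasureTheory ProbabilityTheory

noncomputable section

/-- Number of observations among the first `N` samples equal to the `j`-th support point. -/
def sampleCount {Ω : Type*} {J : ℕ} (X : ℕ → Ω → Fin J) (j : Fin J) (N : ℕ) (ω : Ω) : ℕ :=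
  ((Finset.range N).filter (fun i => X i ω = j)).card

/-- Bayesian reference probability `p̂_{j,N} = (τ_{j,0} - 1 + Σ_{i<N} 1{ξ̂_i = ξ^j}) / (Σ_k τ_{k,0} - J + N)`. -/
def bayesCenter {Ω : Type*} {J : ℕ} (τ0 : Fin J → ℝ) (X : ℕ → Ω → Fin J)
    (N : ℕ) (ω : Ω) (j : Fin J) : ℝ :=
  (τ0 j - 1 + (sampleCount X j N ω : ℝ)) / (∑ k, τ0 k - J + N)

/-- Bayesian radius `r̂_{j,N} = z · sqrt( p̂_{j,N}(1 - p̂_{j,N}) / (Σ_k τ_{k,N} - J) )`. -/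
def bayesRadius {Ω : Type*} {J : ℕ} (τ0 : Fin J → ℝ) (z : ℝ) (X : ℕ → Ω → Fin J)
    (N : ℕ) (ω : Ω) (j : Fin J) : ℝ :=
  z * Real.sqrt (bayesCenter τ0 X N ω j * (1 - bayesCenter τ0 X N ω j) / (∑ k, τ0 k - J + N))

/-- Box-type ambiguity set `𝔓(P,r) = {Q ∈ Δ_J : P_j - r_j ≤ Q_j ≤ P_j + r_j ∀ j}`. -/
def boxSet (J : ℕ) (P r : Fin J → ℝ) : Set (Fin J → ℝ) :=
  {Q | Q ∈ stdSimplex ℝ (Fin J) ∧ ∀ j, P j - r j ≤ Q j ∧ Q j ≤ P j + r j}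

/-- Expectation of `h` under the probability vector `Q`. -/
def expec {J : ℕ} (Q h : Fin J → ℝ) : ℝ := ∑ j, Q j * h j

/-- Weighted sup norm `‖V‖_w = sup_{s ∈ S} |V s| / w s`. -/
noncomputable def wSupNorm {m : ℕ} (S : Set (Fin m → ℝ)) (w V : (Fin m → ℝ) → ℝ) : ℝ :=
  ⨆ s : S, |V (s : Fin m → ℝ)| / w (s : Fin m → ℝ)

/-- Distributionally robust Bellman operator. -/
noncomputable def robustBellman {J m n : ℕ} (A : Set (Fin n → ℝ)) (amb : Set (Fin J → ℝ))
    (C : (Fin m → ℝ) → (Fin n → ℝ) → Fin J → ℝ)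
    (g : (Fin m → ℝ) → (Fin n → ℝ) → Fin J → Fin m → ℝ)
    (γ : ℝ) (V : (Fin m → ℝ) → ℝ) (s : Fin m → ℝ) : ℝ :=
  ⨅ a : A, ⨆ Q : amb,
    expec (Q : Fin J → ℝ) (fun j => C s (a : Fin n → ℝ) j + γ * V (g s (a : Fin n → ℝ) j))

/-- True Bellman operator under the distribution `Pc`. -/
noncomputable def trueBellman {J m n : ℕ} (A : Set (Fin n → ℝ)) (Pc : Fin J → ℝ)
    (C : (Fin m → ℝ) → (Fin n → ℝ) → Fin J → ℝ)
    (g : (Fin m → ℝ) → (Fin n → ℝ) → Fin J → Fin m → ℝ)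
    (γ : ℝ) (V : (Fin m → ℝ) → ℝ) (s : Fin m → ℝ) : ℝ :=
  ⨅ a : A, expec Pc (fun j => C s (a : Fin n → ℝ) j + γ * V (g s (a : Fin n → ℝ) j))

/-- Policy-evaluation Bellman operator under the distribution `Pc`. -/
noncomputable def policyBellman {J m n : ℕ} (Pc : Fin J → ℝ)
    (C : (Fin m → ℝ) → (Fin n → ℝ) → Fin J → ℝ)
    (g : (Fin m → ℝ) → (Fin n → ℝ) → Fin J → Fin m → ℝ)
    (π : (Fin m → ℝ) → (Fin n → ℝ))
    (γ : ℝ) (V : (Fin m → ℝ) → ℝ) (s : Fin m → ℝ) : ℝ :=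
  expec Pc (fun j => C s (π s) j + γ * V (g s (π s) j))

section Aux
variable {ι : Type*} [Nonempty ι]

lemma aux_abs_ciInf_sub_ciInf {F G : ι → ℝ} {c : ℝ}
    (hF : BddBelow (Set.range F)) (hG : BddBelow (Set.range G))
    (h : ∀ i, |F i - G i| ≤ c) : |(⨅ i, F i) - ⨅ i, G i| ≤ c := by
  rw [abs_le]
  constructor
  · have h1 : (⨅ i, G i) - c ≤ ⨅ i, F i := le_ciInf fun i => by
      have h2 := ciInf_le hG i
      have h3 := abs_le.1 (h i)
      linarith [h3.1, h3.2]
    linarith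
  · have h1 : (⨅ i, F i) - c ≤ ⨅ i, G i := le_ciInf fun i => by
      have h2 := ciInf_le hF i
      have h3 := abs_le.1 (h i)
      linarith [h3.1, h3.2]
    linarith

lemma aux_abs_ciSup_sub_ciSup {F G : ι → ℝ} {c : ℝ}
    (hF : BddAbove (Set.range F)) (hG : BddAbove (Set.range G))
    (h : ∀ i, |F i - G i| ≤ c) : |(⨆ i, F i) - ⨆ i, G i| ≤ c := by
  rw [abs_le]
  constructor
  · have h1 : (⨆ i, G i) ≤ (⨆ i, F i) + c := ciSup_le fun i => by
      have h2 := le_ciSup hF i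
      have h3 := abs_le.1 (h i)
      linarith [h3.1, h3.2]
    linarith
  · have h1 : (⨆ i, F i) ≤ (⨆ i, G i) + c := ciSup_le fun i => by
      have h2 := le_ciSup hG i
      have h3 := abs_le.1 (h i)
      linarith [h3.1, h3.2]
    linarith

end Aux

lemma aux_abs_expec_le {J : ℕ} {Q h : Fin J → ℝ} {B : ℝ}
    (hQ : Q ∈ stdSimplex ℝ (Fin J)) (hh : ∀ j, |h j| ≤ B) : |expec Q h| ≤ B := by
  have h1 : |expec Q h| ≤ ∑ j, Q j * |h j| := by
    refine (Finset.abs_sum_le_sum_abs _ _).trans (le_of_eq ?_)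
    refine Finset.sum_congr rfl fun j _ => ?_
    rw [abs_mul, abs_of_nonneg (hQ.1 j)]
  have h2 : ∑ j, Q j * |h j| ≤ ∑ j, Q j * B :=
    Finset.sum_le_sum fun j _ => mul_le_mul_of_nonneg_left (hh j) (hQ.1 j)
  have h3 : ∑ j, Q j * B = B := by rw [← Finset.sum_mul, hQ.2, one_mul]
  linarith

lemma aux_abs_expec_sub_left {J : ℕ} {Q Q' h : Fin J → ℝ} {B : ℝ}
    (hh : ∀ j, |h j| ≤ B) :
    |expec Q h - expec Q' h| ≤ (∑ j, |Q j - Q' j|) * B := by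
  have h0 : expec Q h - expec Q' h = ∑ j, (Q j - Q' j) * h j := by
    simp only [expec, ← Finset.sum_sub_distrib, sub_mul]
  rw [h0, Finset.sum_mul]
  refine (Finset.abs_sum_le_sum_abs _ _).trans (Finset.sum_le_sum fun j _ => ?_)
  rw [abs_mul]
  exact mul_le_mul_of_nonneg_left (hh j) (abs_nonneg _)

lemma aux_abs_expec_sub_right {J : ℕ} {Q h h' : Fin J → ℝ} {B : ℝ}
    (hQ : Q ∈ stdSimplex ℝ (Fin J)) (hh : ∀ j, |h j - h' j| ≤ B) :
    |expec Q h - expec Q h'| ≤ B := by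
  have h0 : expec Q h - expec Q h' = expec Q (fun j => h j - h' j) := by
    simp only [expec, ← Finset.sum_sub_distrib, mul_sub]
  rw [h0]; exact aux_abs_expec_le hQ hh

lemma aux_sum_sampleCount {Ω : Type*} {J : ℕ} (X : ℕ → Ω → Fin J) (N : ℕ) (ω : Ω) :
    ∑ j, sampleCount X j N ω = N := by
  classical
  have := Finset.card_eq_sum_card_fiberwise
    (f := fun i => X i ω) (s := Finset.range N) (t := Finset.univ)
    (fun i _ => Finset.mem_univ _)
  simpa [sampleCount] using this.symm

lemma aux_abs_Q_sub_Pc {J : ℕ} {P r Pc : Fin J → ℝ} {Q : Fin J → ℝ}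
    (hQ : Q ∈ boxSet J P r) :
    ∑ j, |Q j - Pc j| ≤ ∑ j, (|P j - Pc j| + r j) := by
  refine Finset.sum_le_sum fun j _ => ?_
  have h1 := (hQ.2 j).1
  have h2 := (hQ.2 j).2
  have h3 : |Q j - P j| ≤ r j := abs_le.2 ⟨by linarith, by linarith⟩
  calc |Q j - Pc j| = |(P j - Pc j) + (Q j - P j)| := by ring_nf
    _ ≤ |P j - Pc j| + |Q j - P j| := abs_add_le _ _
    _ ≤ |P j - Pc j| + r j := by linarith

/-- SLLN for the empirical frequencies. -/
lemma aux_freq_tendsto {Ω : Type*} [MeasurableSpace Ω] (μ : Measure Ω) [IsProbabilityMeasure μ]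
    {J : ℕ} (Pc : Fin J → ℝ) (hPc0 : ∀ j, 0 ≤ Pc j)
    (X : ℕ → Ω → Fin J) (hmeas : ∀ i, Measurable (X i))
    (hindep : iIndepFun X μ)
    (hident : ∀ i j, μ {ω | X i ω = j} = ENNReal.ofReal (Pc j)) (j : Fin J) :
    ∀ᵐ ω ∂μ, Tendsto (fun N => (sampleCount X j N ω : ℝ) / N) atTop (𝓝 (Pc j)) := by
  classical
  set f : Fin J → ℝ := fun k => if k = j then 1 else 0 with hf
  have hfm : Measurable f := Measurable.of_discrete
  set Y : ℕ → Ω → ℝ := fun i ω => f (X i ω) with hY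
  have hsetm : ∀ i, MeasurableSet {ω | X i ω = j} := fun i =>
    hmeas i (measurableSet_singleton j)
  have hYind : ∀ i, Y i = Set.indicator {ω | X i ω = j} (fun _ => (1 : ℝ)) := by
    intro i
    funext ω
    by_cases h : X i ω = j <;> simp [hY, hf, h, Set.indicator_apply]
  have hint : Integrable (Y 0) μ := by
    rw [hYind 0]
    exact (integrable_const (1 : ℝ)).indicator (hsetm 0)
  have hXid : ∀ i, IdentDistrib (X i) (X 0) μ μ := by
    intro i
    refine ⟨(hmeas i).aemeasurable, (hmeas 0).aemeasurable, ?_⟩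
    refine Measure.ext_of_singleton fun k => ?_
    rw [Measure.map_apply (hmeas i) (measurableSet_singleton k),
      Measure.map_apply (hmeas 0) (measurableSet_singleton k)]
    have h1 : X i ⁻¹' {k} = {ω | X i ω = k} := by ext ω; simp
    have h2 : X 0 ⁻¹' {k} = {ω | X 0 ω = k} := by ext ω; simp
    rw [h1, h2, hident i k, hident 0 k]
  have hYid : ∀ i, IdentDistrib (Y i) (Y 0) μ μ := fun i => (hXid i).comp hfm
  have hYpair : Pairwise (Function.onFun (fun x1 x2 => IndepFun x1 x2 μ) Y) := fun i i' hii' =>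
    (hindep.indepFun hii').comp hfm hfm
  have hEY : ∫ ω, Y 0 ω ∂μ = Pc j := by
    rw [hYind 0]
    rw [integral_indicator_const (1 : ℝ) (hsetm 0)]
    rw [measureReal_def, hident 0 j, ENNReal.toReal_ofReal (hPc0 j)]
    simp
  have hslln := strong_law_ae_real Y hint hYpair hYid
  rw [hEY] at hslln
  filter_upwards [hslln] with ω hω
  have hcount : ∀ N, (sampleCount X j N ω : ℝ) = ∑ i ∈ Finset.range N, Y i ω := by
    intro N
    rw [sampleCount, Finset.card_filter]
    push_cast
    refine Finset.sum_congr rfl fun i _ => ?_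
    by_cases h : X i ω = j <;> simp [hY, hf, h]
  refine hω.congr fun N => ?_
  rw [hcount N]

/-- Convergence of the Bayesian center. -/
lemma aux_center_tendsto {Ω : Type*} {J : ℕ} (τ0 : Fin J → ℝ) (X : ℕ → Ω → Fin J)
    (ω : Ω) (Pc : Fin J → ℝ) (j : Fin J)
    (hb : 0 < ∑ k, τ0 k - J)
    (hω : Tendsto (fun N => (sampleCount X j N ω : ℝ) / N) atTop (𝓝 (Pc j))) :
    Tendsto (fun N => bayesCenter τ0 X N ω j) atTop (𝓝 (Pc j)) := by
  set b : ℝ := ∑ k, τ0 k - J with hbdef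
  have hbN : ∀ N : ℕ, 0 < b + N := fun N => by positivity
  have htop : Tendsto (fun N : ℕ => b + (N : ℝ)) atTop atTop :=
    tendsto_atTop_add_const_left _ b tendsto_natCast_atTop_atTop
  have h1 : Tendsto (fun N : ℕ => (τ0 j - 1) / (b + N)) atTop (𝓝 0) :=
    Tendsto.div_atTop tendsto_const_nhds htop
  have h1b : Tendsto (fun N : ℕ => b / (b + N)) atTop (𝓝 0) :=
    Tendsto.div_atTop tendsto_const_nhds htop
  have hN1 : Tendsto (fun N : ℕ => (N : ℝ) / (b + N)) atTop (𝓝 1) := by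
    have heq : ∀ N : ℕ, (N : ℝ) / (b + N) = 1 - b / (b + N) := by
      intro N
      field_simp
      ring
    have := Filter.Tendsto.sub
      (tendsto_const_nhds : Tendsto (fun _ : ℕ => (1 : ℝ)) atTop (𝓝 1)) h1b
    rw [sub_zero] at this
    exact this.congr fun N => (heq N).symm
  have h2 : Tendsto (fun N : ℕ => (sampleCount X j N ω : ℝ) / (b + N)) atTop (𝓝 (Pc j)) := by
    have hmul := hω.mul hN1
    rw [mul_one] at hmul
    refine hmul.congr' ?_
    filter_upwards [eventually_ge_atTop 1] with N hN
    have hN0 : (N : ℝ) ≠ 0 := Nat.cast_ne_zero.2 (by omega)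
    field_simp
  have hadd := h1.add h2
  rw [zero_add] at hadd
  refine hadd.congr fun N => ?_
  rw [bayesCenter, ← hbdef, ← add_div]

/-- Convergence of the Bayesian radius to 0. -/
lemma aux_radius_tendsto {Ω : Type*} {J : ℕ} (τ0 : Fin J → ℝ) (z : ℝ) (X : ℕ → Ω → Fin J)
    (ω : Ω) (Pc : Fin J → ℝ) (j : Fin J)
    (hb : 0 < ∑ k, τ0 k - J)
    (hc : Tendsto (fun N => bayesCenter τ0 X N ω j) atTop (𝓝 (Pc j))) :
    Tendsto (fun N => bayesRadius τ0 z X N ω j) atTop (𝓝 0) := by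
  have htop : Tendsto (fun N : ℕ => (∑ k, τ0 k - J) + (N : ℝ)) atTop atTop :=
    tendsto_atTop_add_const_left _ _ tendsto_natCast_atTop_atTop
  have hnum : Tendsto (fun N => bayesCenter τ0 X N ω j * (1 - bayesCenter τ0 X N ω j))
      atTop (𝓝 (Pc j * (1 - Pc j))) := hc.mul (tendsto_const_nhds.sub hc)
  have hdiv : Tendsto (fun N : ℕ =>
      bayesCenter τ0 X N ω j * (1 - bayesCenter τ0 X N ω j) / (∑ k, τ0 k - J + N))
      atTop (𝓝 0) := by
    refine (Tendsto.div_atTop hnum htop).congr fun N => ?_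
    ring_nf
  have hsqrt : Tendsto (fun N : ℕ =>
      Real.sqrt (bayesCenter τ0 X N ω j * (1 - bayesCenter τ0 X N ω j) / (∑ k, τ0 k - J + N)))
      atTop (𝓝 0) := by
    have := (Real.continuous_sqrt.tendsto' 0 0 Real.sqrt_zero).comp hdiv
    exact this
  have := hsqrt.const_mul z
  rw [mul_zero] at this
  exact this.congr fun N => by rw [bayesRadius]

/-- The Bayesian center is in the standard simplex. -/
lemma aux_center_simplex {Ω : Type*} {J : ℕ} (τ0 : Fin J → ℝ) (X : ℕ → Ω → Fin J)
    (N : ℕ) (ω : Ω) (hτ0 : ∀ j, 1 < τ0 j) (hb : 0 < ∑ k, τ0 k - J) :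
    bayesCenter τ0 X N ω ∈ stdSimplex ℝ (Fin J) := by
  have hden : (0 : ℝ) < ∑ k, τ0 k - J + N := by positivity
  constructor
  · intro j
    refine div_nonneg ?_ hden.le
    have h1 := (hτ0 j).le
    have h2 : (0 : ℝ) ≤ (sampleCount X j N ω : ℝ) := Nat.cast_nonneg _
    linarith
  · simp only [bayesCenter]
    rw [← Finset.sum_div]
    rw [div_eq_one_iff_eq hden.ne']
    have hsum : ∑ j, ((τ0 j - 1) + (sampleCount X j N ω : ℝ))
        = (∑ j, (τ0 j - 1)) + ∑ j, (sampleCount X j N ω : ℝ) := Finset.sum_add_distrib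
    have h2 : ∑ j, (sampleCount X j N ω : ℝ) = N := by
      rw [← Nat.cast_sum]
      rw [aux_sum_sampleCount]
    have h3 : ∑ j : Fin J, (τ0 j - 1) = ∑ k, τ0 k - J := by
      rw [Finset.sum_sub_distrib]
      simp
    rw [hsum, h2, h3]

lemma core_bound {J m n : ℕ}
    (S : Set (Fin m → ℝ)) (hS : S.Nonempty)
    (A : Set (Fin n → ℝ)) (hA : A.Nonempty)
    (C : (Fin m → ℝ) → (Fin n → ℝ) → Fin J → ℝ)
    (g : (Fin m → ℝ) → (Fin n → ℝ) → Fin J → Fin m → ℝ)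
    (hgS : ∀ s ∈ S, ∀ a ∈ A, ∀ j, g s a j ∈ S)
    (γ : ℝ) (hγ0 : 0 ≤ γ)
    (w : (Fin m → ℝ) → ℝ) (hw1 : ∀ s ∈ S, 1 ≤ w s)
    (Cbar κ : ℝ) (hCbar0 : 0 ≤ Cbar) (hκ0 : 0 ≤ κ)
    (hCb : ∀ s ∈ S, ∀ a ∈ A, ∀ j, |C s a j| ≤ Cbar * w s)
    (hdrift : ∀ s ∈ S, ∀ a ∈ A, ∀ j, w (g s a j) ≤ κ * w s)
    (hγκ : γ * κ < 1)
    (Pc : Fin J → ℝ) (hPc : Pc ∈ stdSimplex ℝ (Fin J))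
    (P r : Fin J → ℝ) (hP : P ∈ stdSimplex ℝ (Fin J)) (hr : ∀ j, 0 ≤ r j)
    (M : ℝ) (hM0 : 0 ≤ M)
    (Vstar : (Fin m → ℝ) → ℝ) (hVstarBd : ∀ s ∈ S, |Vstar s| ≤ M * w s)
    (hVstarFix : ∀ s ∈ S, Vstar s = trueBellman A Pc C g γ Vstar s)
    (MN : ℝ) (hMN0 : 0 ≤ MN)
    (V : (Fin m → ℝ) → ℝ) (hVBd : ∀ s ∈ S, |V s| ≤ MN * w s)
    (hVFix : ∀ s ∈ S, V s = robustBellman A (boxSet J P r) C g γ V s) :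
    0 ≤ wSupNorm S w (fun s => V s - Vstar s) ∧
    wSupNorm S w (fun s => V s - Vstar s) ≤
      (Cbar + γ * κ * M) * (∑ j, (|P j - Pc j| + r j)) / (1 - γ * κ) := by
  haveI : Nonempty ↥S := hS.to_subtype
  haveI : Nonempty ↥A := hA.to_subtype
  have hPbox : P ∈ boxSet J P r := ⟨hP, fun j => ⟨by linarith [hr j], by linarith [hr j]⟩⟩
  haveI : Nonempty ↥(boxSet J P r) := Set.Nonempty.to_subtype ⟨P, hPbox⟩
  set K : ℝ := Cbar + γ * κ * M with hK
  set KN : ℝ := Cbar + γ * κ * MN with hKN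
  set ε : ℝ := ∑ j, (|P j - Pc j| + r j) with hε
  have hε0 : 0 ≤ ε := Finset.sum_nonneg fun j _ =>
    add_nonneg (abs_nonneg _) (hr j)
  have hK0 : 0 ≤ K := by positivity
  have hwpos : ∀ s ∈ S, 0 < w s := fun s hs => lt_of_lt_of_le one_pos (hw1 s hs)
  -- the weighted distance
  set D : ℝ := wSupNorm S w (fun s => V s - Vstar s) with hD
  have hDsup : D = ⨆ s : S, |V (s : Fin m → ℝ) - Vstar (s : Fin m → ℝ)| / w (s : Fin m → ℝ) := rfl
  have hDbdd : BddAbove (Set.range fun s : S => |V (s : Fin m → ℝ) - Vstar (s : Fin m → ℝ)| / w (s : Fin m → ℝ)) := by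
    refine ⟨MN + M, ?_⟩
    rintro x ⟨s, rfl⟩
    have hws := hwpos s s.2
    rw [div_le_iff₀ hws]
    have h1 := hVBd s s.2
    have h2 := hVstarBd s s.2
    calc |V (s : Fin m → ℝ) - Vstar (s : Fin m → ℝ)| ≤ |V (s : Fin m → ℝ)| + |Vstar (s : Fin m → ℝ)| := abs_sub _ _
      _ ≤ MN * w (s : Fin m → ℝ) + M * w (s : Fin m → ℝ) := by linarith
      _ = (MN + M) * w (s : Fin m → ℝ) := by ring
  have hDle : ∀ s (_ : s ∈ S), |V s - Vstar s| ≤ D * w s := by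
    intro s hs
    have h1 : |V s - Vstar s| / w s ≤ D := by
      rw [hDsup]; exact le_ciSup hDbdd ⟨s, hs⟩
    have hws := hwpos s hs
    calc |V s - Vstar s| = (|V s - Vstar s| / w s) * w s := by field_simp
      _ ≤ D * w s := mul_le_mul_of_nonneg_right h1 hws.le
  have hD0 : 0 ≤ D := by
    obtain ⟨s0, hs0⟩ := hS
    have h1 : (0 : ℝ) ≤ |V s0 - Vstar s0| / w s0 :=
      div_nonneg (abs_nonneg _) (hwpos s0 hs0).le
    rw [hDsup]
    exact h1.trans (le_ciSup hDbdd ⟨s0, hs0⟩)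
  refine ⟨hD0, ?_⟩
  -- main pointwise estimate
  have key : ∀ s ∈ S, |V s - Vstar s| ≤ (γ * κ * D + K * ε) * w s := by
    intro s hs
    have hws := hwpos s hs
    -- bounds on the integrands
    have hbst : ∀ a ∈ A, ∀ j, |C s a j + γ * Vstar (g s a j)| ≤ K * w s := by
      intro a ha j
      have h1 := hCb s hs a ha j
      have h2 : |Vstar (g s a j)| ≤ M * w (g s a j) := hVstarBd _ (hgS s hs a ha j)
      have h3 : M * w (g s a j) ≤ M * (κ * w s) :=
        mul_le_mul_of_nonneg_left (hdrift s hs a ha j) hM0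
      have h4 : |γ * Vstar (g s a j)| = γ * |Vstar (g s a j)| := by
        rw [abs_mul, abs_of_nonneg hγ0]
      have h5 : γ * |Vstar (g s a j)| ≤ γ * (M * (κ * w s)) :=
        mul_le_mul_of_nonneg_left (h2.trans h3) hγ0
      have h6 : K * w s = Cbar * w s + γ * (M * (κ * w s)) := by rw [hK]; ring
      calc |C s a j + γ * Vstar (g s a j)| ≤ |C s a j| + |γ * Vstar (g s a j)| := abs_add_le _ _
        _ ≤ Cbar * w s + γ * (M * (κ * w s)) := by rw [h4] at *; linarith
        _ = K * w s := h6.symm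
    have hbht : ∀ a ∈ A, ∀ j, |C s a j + γ * V (g s a j)| ≤ KN * w s := by
      intro a ha j
      have h1 := hCb s hs a ha j
      have h2 : |V (g s a j)| ≤ MN * w (g s a j) := hVBd _ (hgS s hs a ha j)
      have h3 : MN * w (g s a j) ≤ MN * (κ * w s) :=
        mul_le_mul_of_nonneg_left (hdrift s hs a ha j) hMN0
      have h4 : |γ * V (g s a j)| = γ * |V (g s a j)| := by
        rw [abs_mul, abs_of_nonneg hγ0]
      have h5 : γ * |V (g s a j)| ≤ γ * (MN * (κ * w s)) :=
        mul_le_mul_of_nonneg_left (h2.trans h3) hγ0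
      have h6 : KN * w s = Cbar * w s + γ * (MN * (κ * w s)) := by rw [hKN]; ring
      calc |C s a j + γ * V (g s a j)| ≤ |C s a j| + |γ * V (g s a j)| := abs_add_le _ _
        _ ≤ Cbar * w s + γ * (MN * (κ * w s)) := by rw [h4] at *; linarith
        _ = KN * w s := h6.symm
    have hdiffb : ∀ a ∈ A, ∀ j,
        |(C s a j + γ * V (g s a j)) - (C s a j + γ * Vstar (g s a j))| ≤ γ * κ * D * w s := by
      intro a ha j
      have h1 : |V (g s a j) - Vstar (g s a j)| ≤ D * w (g s a j) :=
        hDle _ (hgS s hs a ha j)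
      have h2 : D * w (g s a j) ≤ D * (κ * w s) :=
        mul_le_mul_of_nonneg_left (hdrift s hs a ha j) hD0
      have h3 : (C s a j + γ * V (g s a j)) - (C s a j + γ * Vstar (g s a j))
          = γ * (V (g s a j) - Vstar (g s a j)) := by ring
      rw [h3, abs_mul, abs_of_nonneg hγ0]
      calc γ * |V (g s a j) - Vstar (g s a j)| ≤ γ * (D * (κ * w s)) :=
            mul_le_mul_of_nonneg_left (h1.trans h2) hγ0
        _ = γ * κ * D * w s := by ring
    -- per-action functions
    set F : ↥A → ℝ := fun a =>
      ⨆ Q : ↥(boxSet J P r), expec (Q : Fin J → ℝ)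
        (fun j => C s (a : Fin n → ℝ) j + γ * V (g s (a : Fin n → ℝ) j)) with hF
    set G : ↥A → ℝ := fun a =>
      expec Pc (fun j => C s (a : Fin n → ℝ) j + γ * Vstar (g s (a : Fin n → ℝ) j)) with hG
    set Fst : ↥A → ℝ := fun a =>
      ⨆ Q : ↥(boxSet J P r), expec (Q : Fin J → ℝ)
        (fun j => C s (a : Fin n → ℝ) j + γ * Vstar (g s (a : Fin n → ℝ) j)) with hFst
    have hbddF : ∀ a : ↥A, BddAbove (Set.range fun Q : ↥(boxSet J P r) =>
        expec (Q : Fin J → ℝ) (fun j => C s (a : Fin n → ℝ) j + γ * V (g s (a : Fin n → ℝ) j))) := by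
      intro a
      refine ⟨KN * w s, ?_⟩
      rintro x ⟨Q, rfl⟩
      exact (abs_le.1 (aux_abs_expec_le Q.2.1 (fun j => hbht a a.2 j))).2
    have hbddFst : ∀ a : ↥A, BddAbove (Set.range fun Q : ↥(boxSet J P r) =>
        expec (Q : Fin J → ℝ) (fun j => C s (a : Fin n → ℝ) j + γ * Vstar (g s (a : Fin n → ℝ) j))) := by
      intro a
      refine ⟨K * w s, ?_⟩
      rintro x ⟨Q, rfl⟩
      exact (abs_le.1 (aux_abs_expec_le Q.2.1 (fun j => hbst a a.2 j))).2
    -- step 1 : contraction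
    have step1 : ∀ a : ↥A, |F a - Fst a| ≤ γ * κ * D * w s := by
      intro a
      exact aux_abs_ciSup_sub_ciSup (hbddF a) (hbddFst a)
        (fun Q => aux_abs_expec_sub_right Q.2.1 (fun j => hdiffb a a.2 j))
    -- step 2 : statistical error
    have step2 : ∀ a : ↥A, |Fst a - G a| ≤ K * ε * w s := by
      intro a
      have hup : Fst a ≤ G a + K * ε * w s := by
        refine ciSup_le fun Q => ?_
        have h1 := aux_abs_expec_sub_left (Q := (Q : Fin J → ℝ)) (Q' := Pc)
          (h := fun j => C s (a : Fin n → ℝ) j + γ * Vstar (g s (a : Fin n → ℝ) j))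
          (fun j => hbst a a.2 j)
        have h2 : (∑ j, |(Q : Fin J → ℝ) j - Pc j|) * (K * w s) ≤ ε * (K * w s) :=
          mul_le_mul_of_nonneg_right (aux_abs_Q_sub_Pc Q.2) (by positivity)
        have h3 := (abs_le.1 h1).2
        have : ε * (K * w s) = K * ε * w s := by ring
        rw [hG]; dsimp only; linarith
      have hlo : G a - K * ε * w s ≤ Fst a := by
        have hle : expec P (fun j => C s (a : Fin n → ℝ) j + γ * Vstar (g s (a : Fin n → ℝ) j)) ≤ Fst a := by
          rw [hFst]
          exact le_ciSup (hbddFst a) (⟨P, hPbox⟩ : ↥(boxSet J P r))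
        have h1 := aux_abs_expec_sub_left (Q := P) (Q' := Pc)
          (h := fun j => C s (a : Fin n → ℝ) j + γ * Vstar (g s (a : Fin n → ℝ) j))
          (fun j => hbst a a.2 j)
        have h2 : (∑ j, |P j - Pc j|) * (K * w s) ≤ ε * (K * w s) := by
          refine mul_le_mul_of_nonneg_right ?_ (by positivity)
          exact Finset.sum_le_sum fun j _ => by linarith [hr j]
        have h3 := (abs_le.1 h1).1
        have : ε * (K * w s) = K * ε * w s := by ring
        rw [hG]; dsimp only; linarith
      exact abs_le.2 ⟨by linarith, by linarith⟩
    -- combine over actions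
    have hbddbelF : BddBelow (Set.range F) := by
      refine ⟨-(KN * w s), ?_⟩
      rintro x ⟨a, rfl⟩
      have hle : expec P (fun j => C s (a : Fin n → ℝ) j + γ * V (g s (a : Fin n → ℝ) j)) ≤ F a := by
        rw [hF]
        exact le_ciSup (hbddF a) (⟨P, hPbox⟩ : ↥(boxSet J P r))
      have h1 := (abs_le.1 (aux_abs_expec_le hP (fun j => hbht a a.2 j))).1
      linarith
    have hbddbelG : BddBelow (Set.range G) := by
      refine ⟨-(K * w s), ?_⟩
      rintro x ⟨a, rfl⟩
      exact (abs_le.1 (aux_abs_expec_le hPc (fun j => hbst a a.2 j))).1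
    have hcomb : ∀ a : ↥A, |F a - G a| ≤ γ * κ * D * w s + K * ε * w s := by
      intro a
      calc |F a - G a| = |(F a - Fst a) + (Fst a - G a)| := by ring_nf
        _ ≤ |F a - Fst a| + |Fst a - G a| := abs_add_le _ _
        _ ≤ γ * κ * D * w s + K * ε * w s := add_le_add (step1 a) (step2 a)
    have hfinal : |(⨅ a : ↥A, F a) - ⨅ a : ↥A, G a| ≤ γ * κ * D * w s + K * ε * w s :=
      aux_abs_ciInf_sub_ciInf hbddbelF hbddbelG hcomb
    have hVeq : V s = ⨅ a : ↥A, F a := hVFix s hs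
    have hVsteq : Vstar s = ⨅ a : ↥A, G a := hVstarFix s hs
    rw [hVeq, hVsteq]
    calc |(⨅ a : ↥A, F a) - ⨅ a : ↥A, G a| ≤ γ * κ * D * w s + K * ε * w s := hfinal
      _ = (γ * κ * D + K * ε) * w s := by ring
  -- conclude
  have hDineq : D ≤ γ * κ * D + K * ε := by
    rw [hDsup]
    refine ciSup_le fun s => ?_
    have hws := hwpos s s.2
    rw [div_le_iff₀ hws]
    exact key s s.2
  have hden : 0 < 1 - γ * κ := by linarith
  rw [le_div_iff₀ hden]
  calc D * (1 - γ * κ) = D - γ * κ * D := by ring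
    _ ≤ K * ε := by linarith

/-- almost sure convergence of the episodic Bayesian DROC optimal value
functions to the true optimal value function in the weighted sup norm. -/
theorem episodic_value_convergence_ae
    {Ω : Type*} [MeasurableSpace Ω] (μ : Measure Ω) [IsProbabilityMeasure μ]
    (J m n : ℕ) (hJ : 2 ≤ J)
    (S : Set (Fin m → ℝ)) (hS : S.Nonempty) (hScl : IsClosed S)
    (A : Set (Fin n → ℝ)) (hA : A.Nonempty) (hAcp : IsCompact A)
    (C : (Fin m → ℝ) → (Fin n → ℝ) → Fin J → ℝ)
    (g : (Fin m → ℝ) → (Fin n → ℝ) → Fin J → Fin m → ℝ)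
    (hCcont : ∀ j, ContinuousOn (fun p : (Fin m → ℝ) × (Fin n → ℝ) => C p.1 p.2 j) (S ×ˢ A))
    (hgcont : ∀ j, ContinuousOn (fun p : (Fin m → ℝ) × (Fin n → ℝ) => g p.1 p.2 j) (S ×ˢ A))
    (hgS : ∀ s ∈ S, ∀ a ∈ A, ∀ j, g s a j ∈ S)
    (γ : ℝ) (hγ0 : 0 ≤ γ) (hγ1 : γ < 1)
    (w : (Fin m → ℝ) → ℝ) (hw1 : ∀ s ∈ S, 1 ≤ w s) (hwcont : ContinuousOn w S)
    (Cbar κ : ℝ) (hCbar0 : 0 < Cbar) (hκ0 : 0 ≤ κ)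
    (hCb : ∀ s ∈ S, ∀ a ∈ A, ∀ j, |C s a j| ≤ Cbar * w s)
    (hdrift : ∀ s ∈ S, ∀ a ∈ A, ∀ j, w (g s a j) ≤ κ * w s)
    (hγκ : γ * κ < 1)
    (Pc : Fin J → ℝ) (hPc : Pc ∈ stdSimplex ℝ (Fin J))
    (X : ℕ → Ω → Fin J) (hmeas : ∀ i, Measurable (X i))
    (hindep : iIndepFun X μ)
    (hident : ∀ i j, μ {ω | X i ω = j} = ENNReal.ofReal (Pc j))
    (τ0 : Fin J → ℝ) (hτ0 : ∀ j, 1 < τ0 j)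
    (z : ℝ) (hz : 0 < z)
    (Vstar : (Fin m → ℝ) → ℝ) (hVstarBd : ∃ M, ∀ s ∈ S, |Vstar s| ≤ M * w s)
    (hVstarFix : ∀ s ∈ S, Vstar s = trueBellman A Pc C g γ Vstar s)
    (Vhat : ℕ → Ω → (Fin m → ℝ) → ℝ)
    (hVhatBd : ∀ N ω, ∃ M, ∀ s ∈ S, |Vhat N ω s| ≤ M * w s)
    (hVhatFix : ∀ N ω, ∀ s ∈ S,
      Vhat N ω s =
        robustBellman A (boxSet J (bayesCenter τ0 X N ω) (bayesRadius τ0 z X N ω))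
          C g γ (Vhat N ω) s) :
    ∀ᵐ ω ∂μ,
      Tendsto (fun N => wSupNorm S w (fun s => Vhat N ω s - Vstar s)) atTop (𝓝 0) := by
  classical
  haveI : Nonempty (Fin J) := ⟨⟨0, by omega⟩⟩
  have hb : 0 < ∑ k, τ0 k - J := by
    have h1 : (J : ℝ) = ∑ _k : Fin J, (1 : ℝ) := by simp
    have h2 : ∑ _k : Fin J, (1 : ℝ) < ∑ k, τ0 k :=
      Finset.sum_lt_sum_of_nonempty Finset.univ_nonempty (fun k _ => hτ0 k)
    linarith
  have hPc0 : ∀ j, 0 ≤ Pc j := hPc.1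
  obtain ⟨M0, hM0⟩ := hVstarBd
  set M : ℝ := max M0 0 with hM
  have hM0' : 0 ≤ M := le_max_right _ _
  have hMbd : ∀ s ∈ S, |Vstar s| ≤ M * w s := fun s hs =>
    (hM0 s hs).trans (mul_le_mul_of_nonneg_right (le_max_left _ _)
      (le_trans zero_le_one (hw1 s hs)))
  have hAS : ∀ᵐ ω ∂μ, ∀ j : Fin J,
      Tendsto (fun N => (sampleCount X j N ω : ℝ) / N) atTop (𝓝 (Pc j)) :=
    ae_all_iff.2 fun j => aux_freq_tendsto μ Pc hPc0 X hmeas hindep hident j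
  filter_upwards [hAS] with ω hω
  have hc : ∀ j, Tendsto (fun N => bayesCenter τ0 X N ω j) atTop (𝓝 (Pc j)) :=
    fun j => aux_center_tendsto τ0 X ω Pc j hb (hω j)
  have hrad : ∀ j, Tendsto (fun N => bayesRadius τ0 z X N ω j) atTop (𝓝 0) :=
    fun j => aux_radius_tendsto τ0 z X ω Pc j hb (hc j)
  set εf : ℕ → ℝ := fun N =>
    ∑ j, (|bayesCenter τ0 X N ω j - Pc j| + bayesRadius τ0 z X N ω j) with hεf
  have hεto : Tendsto εf atTop (𝓝 0) := by
    have hterm : ∀ j : Fin J, j ∈ Finset.univ → Tendsto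
        (fun N => |bayesCenter τ0 X N ω j - Pc j| + bayesRadius τ0 z X N ω j)
        atTop (𝓝 0) := by
      intro j _
      have h1 : Tendsto (fun N => |bayesCenter τ0 X N ω j - Pc j|) atTop (𝓝 0) := by
        have := ((hc j).sub (tendsto_const_nhds : Tendsto _ atTop (𝓝 (Pc j)))).abs
        simpa using this
      have := h1.add (hrad j)
      simpa using this
    have := tendsto_finset_sum (Finset.univ : Finset (Fin J)) hterm
    simpa [hεf] using this
  have hbound : ∀ N, 0 ≤ wSupNorm S w (fun s => Vhat N ω s - Vstar s) ∧
      wSupNorm S w (fun s => Vhat N ω s - Vstar s) ≤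
        (Cbar + γ * κ * M) * εf N / (1 - γ * κ) := by
    intro N
    obtain ⟨MN0, hMN0⟩ := hVhatBd N ω
    set MN : ℝ := max MN0 0 with hMN
    have hMN0' : 0 ≤ MN := le_max_right _ _
    have hMNbd : ∀ s ∈ S, |Vhat N ω s| ≤ MN * w s := fun s hs =>
      (hMN0 s hs).trans (mul_le_mul_of_nonneg_right (le_max_left _ _)
        (le_trans zero_le_one (hw1 s hs)))
    exact core_bound S hS A hA C g hgS γ hγ0 w hw1 Cbar κ hCbar0.le hκ0 hCb hdrift hγκ
      Pc hPc (bayesCenter τ0 X N ω) (bayesRadius τ0 z X N ω)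
      (aux_center_simplex τ0 X N ω hτ0 hb)
      (fun j => by rw [bayesRadius]; positivity)
      M hM0' Vstar hMbd hVstarFix MN hMN0' (Vhat N ω) hMNbd (hVhatFix N ω)
  have hg : Tendsto (fun N => (Cbar + γ * κ * M) * εf N / (1 - γ * κ)) atTop (𝓝 0) := by
    have := (hεto.const_mul (Cbar + γ * κ * M)).div_const (1 - γ * κ)
    simpa using this
  exact squeeze_zero (fun N => (hbound N).1) (fun N => (hbound N).2) hg

end
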